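/- Let γ > 1, k₀ > 0, and let ρ, v¹, v² be C¹ functions on an open set O ⊆ ℝ³ (coordinates (t,x₁,x₂)) with ρ > 0, solving ∂_tρ + ∂₁(ρv¹) + ∂₂(ρv²) = 0 and ∂_t vⁱ + v¹∂₁vⁱ + v²∂₂vⁱ = -(2c/(γ-1))·∂ᵢc for i = 1,2, where c := √(k₀γ)·ρ^{(γ-1)/2}. With w̲ := c/(γ-1) + v¹/2, w := c/(γ-1) - v¹/2, ψ₂ := -v², the following identities hold at every point of O: L(w̲) = -c·T̂(w̲)·(T̂¹+1) + (1/2)c·T̂(ψ₂)·T̂² + (1/2)c·X̂(ψ₂)·X̂² - c·X̂(w̲)·X̂¹; L(w) = c·T̂(w)·(T̂¹-1) + (1/2)c·T̂(ψ₂)·T̂² + c·X̂(w)·X̂¹ + (1/2)c·X̂(ψ₂)·X̂²; and L(ψ₂) = -c·T̂(ψ₂) + c·T̂(w+w̲)·T̂² + c·X̂(w+w̲)·X̂². -/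

import Mathlib

/-- `∂_t` of a function on `ℝ³ = ℝ × ℝ × ℝ` with coordinates `(t, x₁, x₂)`. -/
noncomputable def pdt (f : ℝ × ℝ × ℝ → ℝ) (x : ℝ × ℝ × ℝ) : ℝ := fderiv ℝ f x (1, 0, 0)

/-- `∂₁` of a function on `ℝ³`. -/
noncomputable def pd1 (f : ℝ × ℝ × ℝ → ℝ) (x : ℝ × ℝ × ℝ) : ℝ := fderiv ℝ f x (0, 1, 0)

/-- `∂₂` of a function on `ℝ³`. -/
noncomputable def pd2 (f : ℝ × ℝ × ℝ → ℝ) (x : ℝ × ℝ × ℝ) : ℝ := fderiv ℝ f x (0, 0, 1)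

/-- `X̂`-derivative: `X̂ f = X̂¹ ∂₁ f + X̂² ∂₂ f`. -/
noncomputable def Xd (X1 X2 f : ℝ × ℝ × ℝ → ℝ) (x : ℝ × ℝ × ℝ) : ℝ :=
  X1 x * pd1 f x + X2 x * pd2 f x

/-- `T̂`-derivative, where `T̂¹ = -X̂²` and `T̂² = X̂¹`. -/
noncomputable def Td (X1 X2 f : ℝ × ℝ × ℝ → ℝ) (x : ℝ × ℝ × ℝ) : ℝ :=
  (-X2 x) * pd1 f x + X1 x * pd2 f x

/-- Material derivative `B f = ∂_t f + v¹ ∂₁ f + v² ∂₂ f`. -/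
noncomputable def Bd (v1 v2 f : ℝ × ℝ × ℝ → ℝ) (x : ℝ × ℝ × ℝ) : ℝ :=
  pdt f x + v1 x * pd1 f x + v2 x * pd2 f x

/-- Null derivative `L f = B f - c T̂ f`. -/
noncomputable def Ld (v1 v2 c X1 X2 f : ℝ × ℝ × ℝ → ℝ) (x : ℝ × ℝ × ℝ) : ℝ :=
  Bd v1 v2 f x - c x * Td X1 X2 f x

/-- Sound speed `c = √(k₀γ) ρ^{(γ-1)/2}` of the polytropic gas. -/
noncomputable def cs (γ k₀ : ℝ) (ρ : ℝ × ℝ × ℝ → ℝ) (x : ℝ × ℝ × ℝ) : ℝ :=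
  Real.sqrt (k₀ * γ) * ρ x ^ ((γ - 1) / 2)

/-- **Euler equations in the first null frame** in terms of the Riemann invariants
`w̲ = c/(γ-1) + v¹/2`, `w = c/(γ-1) - v¹/2`, and `ψ₂ = -v²`
(here `T̂¹ = -X̂²` and `T̂² = X̂¹`). -/
theorem stmt_4 (γ k₀ : ℝ) (hγ : 1 < γ) (hk : 0 < k₀)
    (O : Set (ℝ × ℝ × ℝ)) (hO : IsOpen O)
    (ρ v1 v2 : ℝ × ℝ × ℝ → ℝ)
    (hρ : ContDiffOn ℝ 1 ρ O) (hv1 : ContDiffOn ℝ 1 v1 O) (hv2 : ContDiffOn ℝ 1 v2 O)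
    (hρpos : ∀ x ∈ O, 0 < ρ x)
    (hcont : ∀ x ∈ O,
      pdt ρ x + pd1 (fun y => ρ y * v1 y) x + pd2 (fun y => ρ y * v2 y) x = 0)
    (hmom1 : ∀ x ∈ O, Bd v1 v2 v1 x = -(2 * cs γ k₀ ρ x / (γ - 1)) * pd1 (cs γ k₀ ρ) x)
    (hmom2 : ∀ x ∈ O, Bd v1 v2 v2 x = -(2 * cs γ k₀ ρ x / (γ - 1)) * pd2 (cs γ k₀ ρ) x)
    (X1 X2 : ℝ × ℝ × ℝ → ℝ) (hX : ∀ x ∈ O, X1 x ^ 2 + X2 x ^ 2 = 1)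
    (wb w ψ2 : ℝ × ℝ × ℝ → ℝ)
    (hwb : wb = fun x => cs γ k₀ ρ x / (γ - 1) + v1 x / 2)
    (hw : w = fun x => cs γ k₀ ρ x / (γ - 1) - v1 x / 2)
    (hψ2 : ψ2 = fun x => -v2 x) :
    ∀ x ∈ O,
      (Ld v1 v2 (cs γ k₀ ρ) X1 X2 wb x
          = -(cs γ k₀ ρ x) * Td X1 X2 wb x * (-X2 x + 1)
            + 1 / 2 * cs γ k₀ ρ x * Td X1 X2 ψ2 x * X1 x
            + 1 / 2 * cs γ k₀ ρ x * Xd X1 X2 ψ2 x * X2 x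
            - cs γ k₀ ρ x * Xd X1 X2 wb x * X1 x)
      ∧ (Ld v1 v2 (cs γ k₀ ρ) X1 X2 w x
          = cs γ k₀ ρ x * Td X1 X2 w x * (-X2 x - 1)
            + 1 / 2 * cs γ k₀ ρ x * Td X1 X2 ψ2 x * X1 x
            + cs γ k₀ ρ x * Xd X1 X2 w x * X1 x
            + 1 / 2 * cs γ k₀ ρ x * Xd X1 X2 ψ2 x * X2 x)
      ∧ (Ld v1 v2 (cs γ k₀ ρ) X1 X2 ψ2 x
          = -(cs γ k₀ ρ x) * Td X1 X2 ψ2 x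
            + cs γ k₀ ρ x * Td X1 X2 (fun y => w y + wb y) x * X1 x
            + cs γ k₀ ρ x * Xd X1 X2 (fun y => w y + wb y) x * X2 x) := by
  subst hwb hw hψ2
  intro x hx
  have hγ1 : (0:ℝ) < γ - 1 := by linarith
  have hγ1' : γ - 1 ≠ 0 := ne_of_gt hγ1
  have hmem : O ∈ nhds x := hO.mem_nhds hx
  have hρx : DifferentiableAt ℝ ρ x :=
    ((hρ.differentiableOn one_ne_zero).differentiableAt hmem)
  have hv1x : DifferentiableAt ℝ v1 x :=
    ((hv1.differentiableOn one_ne_zero).differentiableAt hmem)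
  have hv2x : DifferentiableAt ℝ v2 x :=
    ((hv2.differentiableOn one_ne_zero).differentiableAt hmem)
  have hρ0 : ρ x ≠ 0 := ne_of_gt (hρpos x hx)
  set F := fderiv ℝ ρ x with hF
  set G := fderiv ℝ v1 x with hG
  set H := fderiv ℝ v2 x with hH
  set K := Real.sqrt (k₀ * γ) with hK
  set C := K * ((γ - 1) / 2 * ρ x ^ ((γ - 1) / 2 - 1)) with hC
  have hρ' : HasFDerivAt ρ F x := hρx.hasFDerivAt
  have hv1' : HasFDerivAt v1 G x := hv1x.hasFDerivAt
  have hv2' : HasFDerivAt v2 H x := hv2x.hasFDerivAt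
  have hcs : HasFDerivAt (cs γ k₀ ρ) (C • F) x := by
    have h1 : HasFDerivAt (fun y => ρ y ^ ((γ - 1) / 2))
        (((γ - 1) / 2 * ρ x ^ ((γ - 1) / 2 - 1)) • F) x :=
      hρ'.rpow_const (Or.inl hρ0)
    have h2 := h1.const_mul K
    rw [smul_smul] at h2
    exact h2
  -- derivative of wb
  have hwb' : HasFDerivAt (fun y => cs γ k₀ ρ y / (γ - 1) + v1 y / 2)
      ((γ - 1)⁻¹ • (C • F) + (2:ℝ)⁻¹ • G) x := by
    have h1 : HasFDerivAt (fun y => cs γ k₀ ρ y / (γ - 1)) ((γ - 1)⁻¹ • (C • F)) x := by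
      simpa [div_eq_mul_inv] using hcs.mul_const ((γ - 1)⁻¹)
    have h2 : HasFDerivAt (fun y => v1 y / 2) ((2:ℝ)⁻¹ • G) x := by
      simpa [div_eq_mul_inv] using hv1'.mul_const ((2:ℝ)⁻¹)
    exact h1.add h2
  have hw' : HasFDerivAt (fun y => cs γ k₀ ρ y / (γ - 1) - v1 y / 2)
      ((γ - 1)⁻¹ • (C • F) - (2:ℝ)⁻¹ • G) x := by
    have h1 : HasFDerivAt (fun y => cs γ k₀ ρ y / (γ - 1)) ((γ - 1)⁻¹ • (C • F)) x := by
      simpa [div_eq_mul_inv] using hcs.mul_const ((γ - 1)⁻¹)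
    have h2 : HasFDerivAt (fun y => v1 y / 2) ((2:ℝ)⁻¹ • G) x := by
      simpa [div_eq_mul_inv] using hv1'.mul_const ((2:ℝ)⁻¹)
    exact h1.sub h2
  have hψ' : HasFDerivAt (fun y => -v2 y) (-H) x := hv2'.neg
  have hsum' : HasFDerivAt
      (fun y => (cs γ k₀ ρ y / (γ - 1) - v1 y / 2) + (cs γ k₀ ρ y / (γ - 1) + v1 y / 2))
      (((γ - 1)⁻¹ • (C • F) - (2:ℝ)⁻¹ • G) + ((γ - 1)⁻¹ • (C • F) + (2:ℝ)⁻¹ • G)) x :=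
    hw'.add hwb'
  have hmul1 : HasFDerivAt (fun y => ρ y * v1 y) (ρ x • G + v1 x • F) x := hρ'.mul hv1'
  have hmul2 : HasFDerivAt (fun y => ρ y * v2 y) (ρ x • H + v2 x • F) x := hρ'.mul hv2'
  -- scalar abbreviations
  set c := cs γ k₀ ρ x with hc
  -- key algebraic identity
  have E5 : 2 * ((γ - 1)⁻¹ * C) * ρ x = c := by
    have hpow : ρ x ^ ((γ - 1) / 2 - 1) * ρ x = ρ x ^ ((γ - 1) / 2) := by
      rw [← Real.rpow_add_one hρ0]; ring_nf
    have ht : (γ - 1) * (γ - 1)⁻¹ = 1 := mul_inv_cancel₀ hγ1'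
    rw [hC, hc, cs, ← hK]
    linear_combination ((γ - 1)⁻¹ * K * (γ - 1)) * hpow
      + (K * ρ x ^ ((γ - 1) / 2)) * ht
  -- rewrite all derivatives in the goal
  simp only [Ld, Bd, Td, Xd, pdt, pd1, pd2, hwb'.fderiv, hw'.fderiv, hψ'.fderiv,
    hsum'.fderiv, ContinuousLinearMap.add_apply, ContinuousLinearMap.sub_apply,
    ContinuousLinearMap.smul_apply, ContinuousLinearMap.neg_apply, smul_eq_mul]
  -- hypotheses at x in scalar form
  have E1 : F (1,0,0) + (ρ x * G (0,1,0) + v1 x * F (0,1,0))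
      + (ρ x * H (0,0,1) + v2 x * F (0,0,1)) = 0 := by
    have h := hcont x hx
    simpa [pdt, pd1, pd2, hmul1.fderiv, hmul2.fderiv, ContinuousLinearMap.add_apply,
      ContinuousLinearMap.smul_apply, smul_eq_mul] using h
  have E2 : G (1,0,0) + v1 x * G (0,1,0) + v2 x * G (0,0,1)
      = -(2 * c / (γ - 1)) * (C * F (0,1,0)) := by
    have h := hmom1 x hx
    simpa [Bd, pdt, pd1, pd2, hcs.fderiv, ContinuousLinearMap.smul_apply, smul_eq_mul,
      ← hc] using h
  have E3 : H (1,0,0) + v1 x * H (0,1,0) + v2 x * H (0,0,1)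
      = -(2 * c / (γ - 1)) * (C * F (0,0,1)) := by
    have h := hmom2 x hx
    simpa [Bd, pdt, pd1, pd2, hcs.fderiv, ContinuousLinearMap.smul_apply, smul_eq_mul,
      ← hc] using h
  have E4 : X1 x ^ 2 + X2 x ^ 2 = 1 := hX x hx
  refine ⟨?_, ?_, ?_⟩
  · linear_combination
      ((γ - 1)⁻¹ * C) * E1 + (1/2) * E2 - ((G (0,1,0) + H (0,0,1)) / 2) * E5
      + (c * ((γ - 1)⁻¹ * C * F (0,1,0) + G (0,1,0) / 2) + c * H (0,0,1) / 2) * E4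
  · linear_combination
      ((γ - 1)⁻¹ * C) * E1 - (1/2) * E2 - ((G (0,1,0) + H (0,0,1)) / 2) * E5
      - (c * ((γ - 1)⁻¹ * C * F (0,1,0) - G (0,1,0) / 2) - c * H (0,0,1) / 2) * E4
  · linear_combination
      - E3 - 2 * c * ((γ - 1)⁻¹ * C) * F (0,0,1) * E4
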